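/- Let S be an Artinian commutative semiring, M an S-semimodule of finite length, and α : M → M an S-linear endomorphism. Then α is pseudoregular (i.e., im α = im α²) if and only if the restriction α_* : im α → im α of α to its image (well-defined since α maps im α into im α) is bijective. -/

import Mathlib

/-- The length of an `S`-semimodule `M`: the supremum of all `r : ℕ` such that there exists a
strictly increasing chain `M₀ ⊊ M₁ ⊊ ⋯ ⊊ M_r` of subsemimodules (i.e. `S`-submodules) of `M`. -/
noncomputable def semimoduleLength (S M : Type*) [Semiring S] [AddCommMonoid M]
    [Module S M] : ℕ∞ :=
  ⨆ r : {r : ℕ // ∃ c : Fin (r + 1) → Submodule S M, StrictMono c}, ((r : ℕ) : ℕ∞)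

/-- A commutative semiring `S` is Artinian if every finitely generated `S`-semimodule has
finite length. -/
def IsArtinianSemiring (S : Type u) [CommSemiring S] : Prop :=
  ∀ (M : Type u) [AddCommMonoid M] [Module S M], Module.Finite S M →
    semimoduleLength S M ≠ ⊤

section Aux

variable {S : Type*} [Semiring S]

lemma le_semimoduleLength {M : Type*} [AddCommMonoid M] [Module S M] {r : ℕ}
    (h : ∃ c : Fin (r + 1) → Submodule S M, StrictMono c) :
    (r : ℕ∞) ≤ semimoduleLength S M :=
  le_iSup (fun r : {r : ℕ // ∃ c : Fin (r + 1) → Submodule S M, StrictMono c} =>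
    ((r : ℕ) : ℕ∞)) ⟨r, h⟩

lemma semimoduleLength_eq_top {M : Type*} [AddCommMonoid M] [Module S M]
    (h : ∀ r : ℕ, ∃ c : Fin (r + 1) → Submodule S M, StrictMono c) :
    semimoduleLength S M = ⊤ := by
  by_contra hne
  obtain ⟨n, hn⟩ := WithTop.ne_top_iff_exists.mp hne
  have h1 : ((n + 1 : ℕ) : ℕ∞) ≤ semimoduleLength S M := le_semimoduleLength (h (n + 1))
  rw [← hn] at h1
  exact absurd (Nat.cast_le.mp h1) (by omega)

lemma semimoduleLength_le_of_strictMono {A B : Type*} [AddCommMonoid A] [Module S A]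
    [AddCommMonoid B] [Module S B] (F : Submodule S B → Submodule S A) (hF : StrictMono F) :
    semimoduleLength S B ≤ semimoduleLength S A := by
  refine iSup_le fun r => ?_
  obtain ⟨r, c, hc⟩ := r
  exact le_semimoduleLength ⟨F ∘ c, hF.comp hc⟩

lemma semimoduleLength_le_of_surjective {A B : Type*} [AddCommMonoid A] [Module S A]
    [AddCommMonoid B] [Module S B] (f : A →ₗ[S] B) (hf : Function.Surjective f) :
    semimoduleLength S B ≤ semimoduleLength S A :=
  semimoduleLength_le_of_strictMono (Submodule.comap f)
    (Monotone.strictMono_of_injective (fun _ _ h => Submodule.comap_mono h)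
      (Submodule.comap_injective_of_surjective hf))

lemma semimoduleLength_submodule_le {M : Type*} [AddCommMonoid M] [Module S M]
    (N : Submodule S M) : semimoduleLength S N ≤ semimoduleLength S M :=
  semimoduleLength_le_of_strictMono (Submodule.map N.subtype)
    (Monotone.strictMono_of_injective (fun _ _ h => Submodule.map_mono h)
      (Submodule.map_injective_of_injective N.injective_subtype))

lemma finite_of_semimoduleLength_ne_top {M : Type*} [AddCommMonoid M] [Module S M]
    (hM : semimoduleLength S M ≠ ⊤) : Module.Finite S M := by
  by_contra hfin
  apply hM
  have key : ∀ p : Submodule S M, p.FG → ∃ q : Submodule S M, p < q ∧ q.FG := by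
    intro p hp
    have hne' : p ≠ ⊤ := by
      intro h
      exact hfin (Module.finite_def.mpr (by rw [← h]; exact hp))
    obtain ⟨x, -, hx⟩ := SetLike.exists_of_lt ((lt_top_iff_ne_top.mpr hne') : p < ⊤)
    refine ⟨p ⊔ Submodule.span S {x}, ?_, hp.sup (Submodule.fg_span_singleton x)⟩
    refine lt_of_le_of_ne le_sup_left fun h => hx ?_
    rw [h]
    exact Submodule.mem_sup_right (Submodule.mem_span_singleton_self x)
  classical
  set f : Submodule S M → Submodule S M :=
    fun p => if h : p.FG then (key p h).choose else p with hf
  have hfp : ∀ (p : Submodule S M) (hp : p.FG), f p = (key p hp).choose :=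
    fun p hp => dif_pos hp
  have hfg : ∀ n : ℕ, (f^[n] ⊥).FG ∧ f^[n] ⊥ < f^[n + 1] ⊥ := by
    intro n
    induction n with
    | zero =>
        refine ⟨Submodule.fg_bot, ?_⟩
        show (⊥ : Submodule S M) < f ⊥
        rw [hfp ⊥ Submodule.fg_bot]
        exact (key ⊥ Submodule.fg_bot).choose_spec.1
    | succ n ih =>
        have h1 : f^[n + 1] ⊥ = f (f^[n] ⊥) := Function.iterate_succ_apply' f n ⊥
        have hfg' : (f^[n + 1] ⊥).FG := by
          rw [h1, hfp _ ih.1]; exact (key _ ih.1).choose_spec.2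
        refine ⟨hfg', ?_⟩
        have h3 : f^[n + 2] ⊥ = f (f^[n + 1] ⊥) := Function.iterate_succ_apply' f (n + 1) ⊥
        rw [h3, hfp _ hfg']
        exact (key _ hfg').choose_spec.1
  have hd : StrictMono (fun n => f^[n] ⊥) := strictMono_nat_of_lt_succ fun n => (hfg n).2
  exact semimoduleLength_eq_top fun r =>
    ⟨fun i : Fin (r + 1) => f^[(i : ℕ)] ⊥, fun i j hij => hd hij⟩

end Aux

/-- Over an Artinian commutative semiring, an endomorphism `α` of a finite-length semimodule
is pseudoregular (`im α = im α²`) iff the restriction of `α` to its image is bijective. -/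
theorem pseudoregular_iff_restrict_bijective {S : Type u} [CommSemiring S]
    (hS : IsArtinianSemiring S) {M : Type v} [AddCommMonoid M] [Module S M]
    (hM : semimoduleLength S M ≠ ⊤) (α : M →ₗ[S] M) :
    LinearMap.range α = LinearMap.range (α ∘ₗ α) ↔
      Function.Bijective (α.restrict (p := LinearMap.range α) (q := LinearMap.range α)
        (fun x _ => LinearMap.mem_range_self α x)) := by
  set N := LinearMap.range α with hN
  set β : N →ₗ[S] N := α.restrict (p := N) (q := N)
    (fun x _ => LinearMap.mem_range_self α x) with hβ
  constructor
  · intro h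
    -- surjectivity of β
    have hsurj : Function.Surjective β := by
      rintro ⟨z, hz⟩
      obtain ⟨u, hu⟩ : z ∈ LinearMap.range (α ∘ₗ α) := h ▸ hz
      refine ⟨⟨α u, LinearMap.mem_range_self α u⟩, ?_⟩
      apply Subtype.ext
      exact hu
    refine ⟨?_, hsurj⟩
    -- finite length of N × N
    have hNlen : semimoduleLength S N ≠ ⊤ :=
      fun ht => hM (top_le_iff.mp (ht ▸ semimoduleLength_submodule_le N))
    haveI : Module.Finite S N := finite_of_semimoduleLength_ne_top hNlen
    haveI : Module.Finite S (N × N) := Module.Finite.prod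
    obtain ⟨k, π, hπ⟩ := Module.Finite.exists_fin' S (N × N)
    have hfree : semimoduleLength S (Fin k → S) ≠ ⊤ := hS (Fin k → S) inferInstance
    have hNN : semimoduleLength S (N × N) ≠ ⊤ :=
      fun ht => hfree (top_le_iff.mp (ht ▸ semimoduleLength_le_of_surjective π hπ))
    -- kernel congruence chain
    set K : ℕ → Submodule S (N × N) := fun n =>
      LinearMap.eqLocus ((β ^ n) ∘ₗ LinearMap.fst S N N) ((β ^ n) ∘ₗ LinearMap.snd S N N)
      with hK
    have hKmono : ∀ n, K n ≤ K (n + 1) := by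
      intro n p hp
      have hp' : (β ^ n) p.1 = (β ^ n) p.2 := hp
      show (β ^ (n + 1)) p.1 = (β ^ (n + 1)) p.2
      rw [pow_succ']
      show β ((β ^ n) p.1) = β ((β ^ n) p.2)
      rw [hp']
    have hstab : ∃ n, K (n + 1) ≤ K n := by
      by_contra hcon
      push_neg at hcon
      have hKstrict : StrictMono K := strictMono_nat_of_lt_succ fun n =>
        lt_of_le_not_ge (hKmono n) (hcon n)
      exact hNN (semimoduleLength_eq_top fun r =>
        ⟨fun i : Fin (r + 1) => K i, fun i j hij => hKstrict hij⟩)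
    obtain ⟨n, hn⟩ := hstab
    have hpowsurj : Function.Surjective (β ^ n) := by
      intro y
      obtain ⟨x, hx⟩ := hsurj.iterate n y
      exact ⟨x, by rw [Module.End.pow_apply]; exact hx⟩
    intro x y hxy
    obtain ⟨u, hu⟩ := hpowsurj x
    obtain ⟨v, hv⟩ := hpowsurj y
    have hmem : (u, v) ∈ K (n + 1) := by
      show (β ^ (n + 1)) u = (β ^ (n + 1)) v
      rw [pow_succ']
      show β ((β ^ n) u) = β ((β ^ n) v)
      rw [hu, hv]
      exact hxy
    have h2 : (β ^ n) u = (β ^ n) v := hn hmem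
    rw [← hu, ← hv, h2]
  · intro h
    apply le_antisymm
    · intro x hx
      obtain ⟨w, hw⟩ := h.2 ⟨x, hx⟩
      obtain ⟨u, hu⟩ := w.2
      refine ⟨u, ?_⟩
      have hwx : α (w : M) = x := congrArg Subtype.val hw
      show α (α u) = x
      rw [hu]
      exact hwx
    · intro x hx
      obtain ⟨u, rfl⟩ := hx
      exact ⟨α u, rfl⟩
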